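/- Let 𝒜 be a central S-ring over a finite group G. Then 𝒜 is rational if and only if for every irreducible complex character χ of G and every basic set X ∈ 𝒮(𝒜), the character sum ∑_{x∈X} χ(x) is a rational number. -/

import Mathlib

open scoped Pointwise

/-- The sum `X̲ = ∑_{x ∈ X} x` of a subset `X` of `G`, as an element of the
integral group ring `ℤG = MonoidAlgebra ℤ G`. -/
noncomputable def clsSum {G : Type*} [Group G] [DecidableEq G] (X : Finset G) : MonoidAlgebra ℤ G :=
  ∑ x ∈ X, MonoidAlgebra.single x 1

/-- A Schur ring (S-ring) over a finite group `G`: a partition `S` of `G` into nonempty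
classes such that `{1} ∈ S`, `S` is closed under taking inverses of classes, and the
`ℤ`-span of the class sums is closed under multiplication (hence a subring of `ℤG`). -/
structure SRing (G : Type*) [Group G] [Fintype G] [DecidableEq G] where
  S : Finset (Finset G)
  nonempty_mem : ∀ X ∈ S, X.Nonempty
  cover : ∀ g : G, ∃! X : Finset G, X ∈ S ∧ g ∈ X
  one_mem : ({1} : Finset G) ∈ S
  inv_mem : ∀ X ∈ S, X⁻¹ ∈ S
  mul_closed : ∀ ξ η : MonoidAlgebra ℤ G,
    ξ ∈ Submodule.span ℤ (clsSum '' (S : Set (Finset G))) →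
    η ∈ Submodule.span ℤ (clsSum '' (S : Set (Finset G))) →
    ξ * η ∈ Submodule.span ℤ (clsSum '' (S : Set (Finset G)))

namespace SRing

variable {G : Type*} [Group G] [Fintype G] [DecidableEq G]

/-- The underlying `ℤ`-module of the S-ring `A` inside `ℤG`. -/
noncomputable def span (A : SRing G) : Submodule ℤ (MonoidAlgebra ℤ G) :=
  Submodule.span ℤ (clsSum '' (A.S : Set (Finset G)))

/-- An S-ring is central if it is contained in the center of `ℤG`. -/
def IsCentral (A : SRing G) : Prop :=
  ∀ ξ ∈ A.span, ∀ η : MonoidAlgebra ℤ G, ξ * η = η * ξ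

/-- A set `T ⊆ G` is an `A`-set if it is a union of basic sets of `A`. -/
def IsASet (A : SRing G) (T : Set G) : Prop :=
  ∀ X ∈ A.S, (∃ x ∈ X, x ∈ T) → ∀ x ∈ X, x ∈ T

/-- An S-ring is primitive if its only `A`-subgroups are trivial. -/
def IsPrimitive (A : SRing G) : Prop :=
  ∀ H : Subgroup G, A.IsASet (H : Set G) → H = ⊥ ∨ H = ⊤

end SRing

/-- A central S-ring is rational if every basic set is fixed by all power maps
`x ↦ x^m` with `m` coprime to `|G|`. -/
def SRing.IsRational {G : Type*} [Group G] [Fintype G] [DecidableEq G] (A : SRing G) : Prop :=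
  ∀ X ∈ A.S, ∀ m : ℤ, Int.gcd m (Fintype.card G) = 1 → X.image (fun x => x ^ m) = X

namespace SRingAux

variable {G : Type} [Group G] [Fintype G] [DecidableEq G]

/-- Coefficient of a sum of singles. -/
lemma coeff_sum_single {R : Type*} [Semiring R] (X : Finset G) (p : G → G)
    (hp : ∀ x ∈ X, ∀ y ∈ X, p x = p y → x = y) (y : G) :
    (∑ x ∈ X, MonoidAlgebra.single (p x) (1 : R)).coeff y
      = if y ∈ X.image p then 1 else 0 := by
  classical
  rw [MonoidAlgebra.coeff_sum, Finsupp.finset_sum_apply]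
  have h1 : ∀ x ∈ X, (MonoidAlgebra.single (p x) (1:R)).coeff y = if p x = y then 1 else 0 := by
    intro x hx; exact Finsupp.single_apply
  rw [Finset.sum_congr rfl h1, ← Finset.sum_image (g := p) (f := fun z => if z = y then (1:R) else 0) hp,
    Finset.sum_ite_eq']

lemma conj_mem_of_clsSum_comm (X : Finset G)
    (hc : ∀ η : MonoidAlgebra ℤ G, clsSum X * η = η * clsSum X)
    (g x : G) (hx : x ∈ X) : g * x * g⁻¹ ∈ X := by
  classical
  have h := hc (MonoidAlgebra.single g 1)
  have hL : clsSum X * MonoidAlgebra.single g 1 = ∑ x ∈ X, MonoidAlgebra.single (x * g) (1:ℤ) := by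
    rw [clsSum, Finset.sum_mul]
    exact Finset.sum_congr rfl fun z _ => by
      rw [MonoidAlgebra.single_mul_single, one_mul]
  have hR : MonoidAlgebra.single g (1:ℤ) * clsSum X = ∑ x ∈ X, MonoidAlgebra.single (g * x) (1:ℤ) := by
    rw [clsSum, Finset.mul_sum]
    exact Finset.sum_congr rfl fun z _ => by
      rw [MonoidAlgebra.single_mul_single, one_mul]
  rw [hL, hR] at h
  have hinj1 : ∀ a ∈ X, ∀ b ∈ X, a * g = b * g → a = b := fun a _ b _ h => by
    simpa using mul_right_cancel h
  have hinj2 : ∀ a ∈ X, ∀ b ∈ X, g * a = g * b → a = b := fun a _ b _ h => by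
    simpa using mul_left_cancel h
  have h2 := congrArg (fun f : MonoidAlgebra ℤ G => f.coeff (g * x)) h
  simp only [coeff_sum_single X _ hinj1, coeff_sum_single X _ hinj2] at h2
  have hmem : g * x ∈ X.image (fun z => g * z) := Finset.mem_image.2 ⟨x, hx, rfl⟩
  rw [if_pos hmem] at h2
  have : g * x ∈ X.image (fun z => z * g) := by
    by_contra hcon
    rw [if_neg hcon] at h2
    exact one_ne_zero h2.symm
  obtain ⟨z, hz, hzx⟩ := Finset.mem_image.1 this
  have : z = g * x * g⁻¹ := by
    rw [← hzx]; group
  rwa [this] at hz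

/-- Commutation of `∑ u (x^m)` with `u g`, for a conjugation-closed `X`. -/
lemma comm_sum_pow {R : Type*} [Ring R] (u : G →* R) (X : Finset G)
    (hconj : ∀ g x, x ∈ X → g * x * g⁻¹ ∈ X) (m : ℕ) (g : G) :
    u g * (∑ x ∈ X, u (x ^ m)) = (∑ x ∈ X, u (x ^ m)) * u g := by
  rw [Finset.mul_sum, Finset.sum_mul]
  refine Finset.sum_nbij' (fun x => g * x * g⁻¹) (fun x => g⁻¹ * x * g)
    (fun a ha => hconj g a ha) (fun a ha => by simpa using hconj g⁻¹ a ha)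
    (fun a _ => by group) (fun a _ => by group) (fun a _ => ?_)
  have hpow : (g * a * g⁻¹) ^ m = g * a ^ m * g⁻¹ := by
    simpa [MulAut.conj_apply] using map_pow (MulAut.conj g) a m
  rw [hpow, ← map_mul, ← map_mul]
  congr 1
  group

end SRingAux

namespace SRingAux
open CategoryTheory

variable {G : Type} [Group G] [Fintype G] [DecidableEq G]

set_option linter.unusedSectionVars false

/-- A `G`-equivariant endomorphism of a simple `FDRep` with trace zero is zero. -/
lemma equivariant_trace_zero_eq_zero (V : FDRep ℂ G) (hs : Simple V)
    (φ : V →ₗ[ℂ] V) (hcomm : ∀ g : G, (V.ρ g) ∘ₗ φ = φ ∘ₗ (V.ρ g))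
    (htr : LinearMap.trace ℂ V φ = 0) : φ = 0 := by
  classical
  let Φ : V ⟶ V := ⟨FGModuleCat.ofHom φ, fun g => by ext v; exact (LinearMap.congr_fun (hcomm g) v).symm⟩
  obtain ⟨c, hc⟩ := endomorphism_simple_eq_smul_id (C := FDRep ℂ G) ℂ Φ
  have hhom : φ = c • LinearMap.id := by
    have := congrArg (fun f : V ⟶ V => f.hom.hom.hom) hc
    exact this.symm
  have hnt : Nontrivial V := by
    by_contra h
    rw [not_nontrivial_iff_subsingleton] at h
    refine id_nonzero V ?_
    apply Action.Hom.ext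
    apply FGModuleCat.hom_ext
    apply LinearMap.ext
    intro v
    exact @Subsingleton.elim _ h _ _
  have hrk : ((Module.finrank ℂ V : ℂ)) ≠ 0 := by
    have := Module.finrank_pos (R := ℂ) (M := V)
    exact Nat.cast_ne_zero.mpr (by omega)
  have hmul : c * (Module.finrank ℂ V : ℂ) = 0 := by
    have h0 := htr
    rw [hhom] at h0
    simpa [LinearMap.trace_id, smul_eq_mul] using h0
  have hc0 : c = 0 := by
    rcases mul_eq_zero.1 hmul with h | h
    · exact h
    · exact absurd h hrk
  rw [hhom, hc0, zero_smul]

/-- If the character sums of `X^{(m)}` and `X` agree on a simple rep, the corresponding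
sums of operators agree. -/
lemma sum_rho_pow_eq (V : FDRep ℂ G) (hs : Simple V) (X : Finset G)
    (hconj : ∀ g x, x ∈ X → g * x * g⁻¹ ∈ X) (m : ℕ)
    (htr : ∑ x ∈ X, V.character (x ^ m) = ∑ x ∈ X, V.character x) :
    (∑ x ∈ X, V.ρ (x ^ m)) = ∑ x ∈ X, V.ρ x := by
  classical
  have hsub : ((∑ x ∈ X, V.ρ (x ^ m)) - ∑ x ∈ X, V.ρ x) = 0 := by
    refine equivariant_trace_zero_eq_zero V hs _ (fun g => ?_) ?_
    · have h1 := comm_sum_pow (V.ρ) X hconj m g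
      have h2 := comm_sum_pow (V.ρ) X hconj 1 g
      simp only [pow_one] at h2
      have h3 : (V.ρ g) ∘ₗ ((∑ x ∈ X, V.ρ (x ^ m)) - ∑ x ∈ X, V.ρ x)
          = (V.ρ g) * (∑ x ∈ X, V.ρ (x ^ m)) - (V.ρ g) * (∑ x ∈ X, V.ρ x) := by
        simp [Module.End.mul_eq_comp, LinearMap.comp_sub]
      rw [h3, h1, h2]
      simp [Module.End.mul_eq_comp, LinearMap.sub_comp]
    · rw [map_sub, map_sum, map_sum]
      simp only [FDRep.character] at htr
      rw [htr]
      exact sub_self _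
  exact sub_eq_zero.1 hsub

end SRingAux

namespace SRingAux
open Polynomial

variable {G : Type} [Group G] [Fintype G] [DecidableEq G]

set_option linter.unusedSectionVars false

lemma pow_apply_of_eigen {V : Type*} [AddCommGroup V] [Module ℂ V]
    (f : Module.End ℂ V) (μ : ℂ) (x : V) (hx : f x = μ • x) (k : ℕ) :
    (f ^ k) x = μ ^ k • x := by
  induction k with
  | zero => simp
  | succ k ih =>
    rw [pow_succ, Module.End.mul_apply, hx, map_smul, ih, smul_smul, pow_succ, mul_comm]

/-- The character values of powers of `g` are simultaneously given by eigenvalues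
that are `n`-th roots of unity. -/
lemma char_pow_eq (V : FDRep ℂ G) (g : G) :
    ∃ (T : Finset ℂ) (d : ℂ → ℕ), (∀ μ ∈ T, μ ^ (Fintype.card G) = 1) ∧
      ∀ k : ℕ, V.character (g ^ k) = ∑ μ ∈ T, (d μ : ℂ) * μ ^ k := by
  classical
  set n := Fintype.card G with hn
  set f : Module.End ℂ V := V.ρ g with hf
  have hfn : f ^ n = 1 := by
    rw [hf, ← map_pow, pow_card_eq_one, map_one]
  have hsq : Squarefree ((X : ℂ[X]) ^ n - 1) := by
    refine (Polynomial.X_pow_sub_one_separable_iff.2 ?_).squarefree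
    simp [hn, Fintype.card_ne_zero]
  have hav : (aeval f) ((X : ℂ[X]) ^ n - 1) = 0 := by
    rw [map_sub, map_pow, aeval_X, map_one, hfn, sub_self]
  have hss : f.IsFinitelySemisimple :=
    (Module.End.isSemisimple_of_squarefree_aeval_eq_zero hsq hav).isFinitelySemisimple
  have htop : ⨆ μ, f.eigenspace μ = ⊤ := by
    have h := Module.End.iSup_maxGenEigenspace_eq_top f
    have h2 : ∀ μ, f.maxGenEigenspace μ = f.eigenspace μ :=
      hss.maxGenEigenspace_eq_eigenspace
    simpa [h2] using h
  have hint : DirectSum.IsInternal f.eigenspace :=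
    DirectSum.isInternal_submodule_of_iSupIndep_of_iSup_eq_top f.eigenspaces_iSupIndep htop
  have hfin : {μ | f.eigenspace μ ≠ ⊥}.Finite := by
    have hmp : minpoly ℂ f ≠ 0 := minpoly.ne_zero (Algebra.IsIntegral.isIntegral (R := ℂ) f)
    refine Set.Finite.subset (minpoly ℂ f).roots.toFinset.finite_toSet ?_
    intro μ hμ
    simp only [Set.mem_setOf_eq] at hμ
    simp only [Finset.coe_sort_coe, Multiset.mem_toFinset, Finset.mem_coe]
    rw [Polynomial.mem_roots hmp]
    exact Module.End.hasEigenvalue_iff_isRoot.1 hμ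
  refine ⟨hfin.toFinset, fun μ => Module.finrank ℂ (f.eigenspace μ), ?_, ?_⟩
  · intro μ hμ
    rw [Set.Finite.mem_toFinset] at hμ
    obtain ⟨x, hx, hx0⟩ := (Submodule.ne_bot_iff _).1 hμ
    have := pow_apply_of_eigen f μ x (Module.End.mem_eigenspace_iff.1 hx) n
    rw [hfn] at this
    have h1 : (μ ^ n - 1) • x = 0 := by
      rw [sub_smul, one_smul, ← this, Module.End.one_apply, sub_self]
    rcases smul_eq_zero.1 h1 with h | h
    · exact sub_eq_zero.1 h
    · exact absurd h hx0
  · intro k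
    have hmaps : ∀ μ : ℂ, Set.MapsTo (f ^ k) (f.eigenspace μ) (f.eigenspace μ) := by
      intro μ x hx
      have := pow_apply_of_eigen f μ x (Module.End.mem_eigenspace_iff.1 hx) k
      rw [this]
      exact Submodule.smul_mem _ _ hx
    have hchar : V.character (g ^ k) = LinearMap.trace ℂ V (f ^ k) := by
      rw [FDRep.character, hf, map_pow]
    rw [hchar, LinearMap.trace_eq_sum_trace_restrict' hint hfin hmaps]
    refine Finset.sum_congr rfl fun μ hμ => ?_
    have hres : (f ^ k).restrict (hmaps μ) = (μ ^ k) • LinearMap.id := by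
      apply LinearMap.ext
      rintro ⟨x, hx⟩
      apply Subtype.ext
      change (f ^ k) x = _
      simpa using pow_apply_of_eigen f μ x (Module.End.mem_eigenspace_iff.1 hx) k
    rw [hres, map_smul, LinearMap.trace_id, smul_eq_mul, mul_comm]

end SRingAux

namespace SRingAux

variable {G : Type} [Group G] [Fintype G] [DecidableEq G]

set_option linter.unusedSectionVars false

/-- Master lemma: character sums over `X` of all powers are simultaneously expressed
through a single multiset of exponents of a primitive root of unity. -/
lemma exists_exponents (V : FDRep ℂ G) (X : Finset G) {ζ : ℂ}
    (hζ : IsPrimitiveRoot ζ (Fintype.card G)) :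
    ∃ E : Multiset ℕ, ∀ k : ℕ,
      ∑ x ∈ X, V.character (x ^ k) = ((E.map fun e => ζ ^ (e * k)).sum) := by
  classical
  haveI : NeZero (Fintype.card G) := ⟨Fintype.card_ne_zero⟩
  choose T d hroot hchar using fun x : G => char_pow_eq V x
  have hexp : ∀ x : G, ∀ μ ∈ T x, ∃ i, ζ ^ i = μ := by
    intro x μ hμ
    obtain ⟨i, _, hi⟩ := hζ.eq_pow_of_pow_eq_one (hroot x μ hμ)
    exact ⟨i, hi⟩
  set e : G → ℂ → ℕ := fun x μ => if h : ∃ i, ζ ^ i = μ then h.choose else 0 with he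
  have hze : ∀ x : G, ∀ μ ∈ T x, ζ ^ (e x μ) = μ := by
    intro x μ hμ
    have h := hexp x μ hμ
    simp only [he, dif_pos h]
    exact h.choose_spec
  refine ⟨X.val.bind (fun x => (T x).val.bind
      (fun μ => Multiset.replicate (d x μ) (e x μ))), fun k => ?_⟩
  rw [Multiset.map_bind, Multiset.sum_bind, Finset.sum_eq_multiset_sum]
  refine congrArg Multiset.sum (Multiset.map_congr rfl ?_)
  intro x hx
  rw [hchar x k, Multiset.map_bind, Multiset.sum_bind, Finset.sum_eq_multiset_sum]
  refine congrArg Multiset.sum (Multiset.map_congr rfl ?_)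
  intro μ hμ
  rw [Multiset.map_replicate, Multiset.sum_replicate, nsmul_eq_mul, pow_mul, hze x μ hμ]
end SRingAux

namespace SRingAux
open CategoryTheory

variable {G : Type} [Group G] [Fintype G] [DecidableEq G]

set_option linter.unusedSectionVars false

noncomputable instance : FiniteDimensional ℂ (MonoidAlgebra ℂ G) :=
  Module.Finite.equiv (MonoidAlgebra.coeffLinearEquiv ℂ).symm

noncomputable instance (W : Submodule (MonoidAlgebra ℂ G) (MonoidAlgebra ℂ G)) :
    FiniteDimensional ℂ ↥W :=
  FiniteDimensional.of_injective ((W.subtype).restrictScalars ℂ) W.injective_subtype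

/-- The representation of `G` on a `ℂ[G]`-submodule of the group algebra. -/
noncomputable def subRep (W : Submodule (MonoidAlgebra ℂ G) (MonoidAlgebra ℂ G)) :
    Representation ℂ G ↥W where
  toFun g :=
    { toFun := fun w => (MonoidAlgebra.single g 1 : MonoidAlgebra ℂ G) • w
      map_add' := fun w₁ w₂ => smul_add _ _ _
      map_smul' := fun c w => smul_comm _ c w }
  map_one' := by
    apply LinearMap.ext; intro w
    simp only [LinearMap.coe_mk, AddHom.coe_mk, Module.End.one_apply]
    rw [← MonoidAlgebra.one_def, one_smul]
  map_mul' g h := by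
    apply LinearMap.ext; intro w
    simp only [LinearMap.coe_mk, AddHom.coe_mk, Module.End.mul_apply]
    rw [← mul_smul, MonoidAlgebra.single_mul_single, one_mul]

lemma subRep_apply (W : Submodule (MonoidAlgebra ℂ G) (MonoidAlgebra ℂ G)) (g : G) (w : ↥W) :
    subRep W g w = (MonoidAlgebra.single g 1 : MonoidAlgebra ℂ G) • w := rfl

/-- The `FDRep` attached to a `ℂ[G]`-submodule of the group algebra. -/
noncomputable def subFDRep (W : Submodule (MonoidAlgebra ℂ G) (MonoidAlgebra ℂ G)) :
    FDRep ℂ G := FDRep.of (subRep W)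

lemma subFDRep_simple (W : Submodule (MonoidAlgebra ℂ G) (MonoidAlgebra ℂ G))
    (hW : IsSimpleModule (MonoidAlgebra ℂ G) ↥W) : Simple (subFDRep W) := by
  classical
  haveI := hW
  constructor
  intro Y f hm
  constructor
  · -- IsIso f → f ≠ 0
    intro hiso h0
    haveI := hiso
    have hid : (𝟙 (subFDRep W)) = (0 : subFDRep W ⟶ subFDRep W) := by
      have h1 : inv f ≫ f = inv f ≫ 0 := congrArg (CategoryTheory.CategoryStruct.comp (inv f)) h0
      rw [IsIso.inv_hom_id f] at h1
      rw [h1, Limits.comp_zero]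
    have hid' := congrArg (fun f => f.hom.hom.hom) hid
    have hnt : Nontrivial ↥W := IsSimpleModule.nontrivial (R := MonoidAlgebra ℂ G) (M := ↥W)
    obtain ⟨w₁, w₂, hne⟩ := hnt
    refine hne ?_
    have h1 : ∀ w : ↥W, w = 0 := by
      intro w
      have := LinearMap.congr_fun hid' w
      exact this
    rw [h1 w₁, h1 w₂]
  · -- f ≠ 0 → IsIso f
    intro hne
    set L : Y →ₗ[ℂ] ↥W := f.hom.hom.hom with hL
    have hcommf : ∀ (g : G) (y : Y),
        L ((Y.ρ g) y) = (MonoidAlgebra.single g 1 : MonoidAlgebra ℂ G) • (L y) := by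
      intro g y
      have := LinearMap.congr_fun (congrArg (fun h => h.hom.hom) (f.comm g)) y
      exact this
    -- injectivity
    have hker : LinearMap.ker L = ⊥ := by
      set N := LinearMap.ker L with hN
      have hmapsto : ∀ g : G, ∀ y ∈ N, (Y.ρ g) y ∈ N := by
        intro g y hy
        rw [hN, LinearMap.mem_ker] at hy ⊢
        rw [hcommf g y, hy, smul_zero]
      let ρN : Representation ℂ G ↥N :=
        { toFun := fun g => (Y.ρ g).restrict (fun y hy => hmapsto g y hy)
          map_one' := by
            apply LinearMap.ext; rintro ⟨y, hy⟩
            apply Subtype.ext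
            simp [LinearMap.restrict_apply]
          map_mul' := fun g h => by
            apply LinearMap.ext; rintro ⟨y, hy⟩
            apply Subtype.ext
            simp [LinearMap.restrict_apply] }
      let Z : FDRep ℂ G := FDRep.of ρN
      let ι : Z ⟶ Y := ⟨FGModuleCat.ofHom (N.subtype), fun g => by
        apply FGModuleCat.hom_ext
        apply LinearMap.ext; rintro ⟨y, hy⟩
        rfl⟩
      have hcomp : ι ≫ f = 0 := by
        apply Action.Hom.ext
        apply FGModuleCat.hom_ext
        apply LinearMap.ext
        rintro ⟨y, hy⟩
        have : L y = 0 := hy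
        exact this
      have hι : ι = 0 := (Preadditive.mono_iff_cancel_zero f).1 hm Z ι hcomp
      rw [eq_bot_iff]
      rintro y (hy : y ∈ N)
      have : (⟨y, hy⟩ : ↥N) = 0 := by
        have := congrArg (fun h => h.hom.hom.hom) hι
        have h2 := LinearMap.congr_fun this ⟨y, hy⟩
        simp only [ι] at h2
        have h3 : y = 0 := h2
        exact Subtype.ext h3
      simpa using congrArg Subtype.val this
    -- surjectivity
    have hsurj : Function.Surjective L := by
      let P : Submodule (MonoidAlgebra ℂ G) ↥W :=
        { carrier := Set.range L
          add_mem' := by rintro _ _ ⟨y₁, rfl⟩ ⟨y₂, rfl⟩; exact ⟨y₁ + y₂, map_add _ _ _⟩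
          zero_mem' := ⟨0, map_zero _⟩
          smul_mem' := by
            intro a
            have key : ∀ a : MonoidAlgebra ℂ G, ∀ v ∈ Set.range L, a • v ∈ Set.range L := by
              intro a
              refine MonoidAlgebra.induction_on
                (motive := fun a => ∀ v ∈ Set.range ⇑L, a • v ∈ Set.range ⇑L) a ?_ ?_ ?_
              · rintro g _ ⟨y, rfl⟩
                rw [MonoidAlgebra.of_apply]
                exact ⟨Y.ρ g y, hcommf g y⟩
              · rintro a b ha hb v hv
                rw [add_smul]
                obtain ⟨y₁, h₁⟩ := ha v hv
                obtain ⟨y₂, h₂⟩ := hb v hv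
                exact ⟨y₁ + y₂, by rw [map_add, h₁, h₂]⟩
              · rintro r a ha v hv
                obtain ⟨y, hy⟩ := ha v hv
                rw [smul_assoc]
                exact ⟨r • y, by rw [map_smul, hy]⟩
            intro v hv
            exact key a v hv }
      have hPne : P ≠ ⊥ := by
        intro hbot
        refine hne ?_
        apply Action.Hom.ext
        apply FGModuleCat.hom_ext
        apply LinearMap.ext
        intro y
        have : L y ∈ P := ⟨y, rfl⟩
        rw [hbot] at this
        have h' : L y = 0 := by simpa using this
        exact h'
      have hPtop : P = ⊤ := (eq_bot_or_eq_top P).resolve_left hPne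
      intro w
      have : w ∈ P := by rw [hPtop]; trivial
      exact this
    -- build the inverse
    have hbij : Function.Bijective L := ⟨LinearMap.ker_eq_bot.1 hker, hsurj⟩
    let e : Y ≃ₗ[ℂ] ↥W := LinearEquiv.ofBijective L hbij
    have h2 : ∀ v : ↥W, L ((e.symm : ↥W →ₗ[ℂ] Y) v) = v := fun v => e.apply_symm_apply v
    let finv : subFDRep W ⟶ Y := ⟨FGModuleCat.ofHom (e.symm : ↥W →ₗ[ℂ] Y), fun g => by
      apply FGModuleCat.hom_ext
      apply LinearMap.ext
      intro w
      apply hbij.1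
      show L ((e.symm : ↥W →ₗ[ℂ] Y) ((subFDRep W).ρ g w)) = L ((Y.ρ g) ((e.symm : ↥W →ₗ[ℂ] Y) w))
      rw [hcommf g]
      erw [h2, h2]
      rfl⟩
    refine ⟨⟨finv, ?_, ?_⟩⟩
    · apply Action.Hom.ext
      apply FGModuleCat.hom_ext
      apply LinearMap.ext
      intro y
      have : (e.symm) (L y) = y := e.symm_apply_apply y
      exact this
    · apply Action.Hom.ext
      apply FGModuleCat.hom_ext
      apply LinearMap.ext
      intro w
      have : L ((e.symm) w) = w := e.apply_symm_apply w
      exact this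

end SRingAux

namespace SRingAux
open CategoryTheory

variable {G : Type} [Group G] [Fintype G] [DecidableEq G]

set_option linter.unusedSectionVars false

/-- An element of `ℂ[G]` that is central and kills every simple submodule of the
regular module is zero. -/
lemma eq_zero_of_kills_simples (D : MonoidAlgebra ℂ G)
    (hcomm : ∀ η, D * η = η * D)
    (hkill : ∀ W : Submodule (MonoidAlgebra ℂ G) (MonoidAlgebra ℂ G),
      IsSimpleModule (MonoidAlgebra ℂ G) ↥W → ∀ w ∈ W, D * w = 0) : D = 0 := by
  classical
  let Lz : MonoidAlgebra ℂ G →ₗ[MonoidAlgebra ℂ G] MonoidAlgebra ℂ G :=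
    { toFun := fun v => D * v
      map_add' := fun a b => mul_add _ _ _
      map_smul' := fun a v => by
        simp only [smul_eq_mul, RingHom.id_apply]
        rw [← mul_assoc, hcomm a, mul_assoc] }
  have hle : sSup {m : Submodule (MonoidAlgebra ℂ G) (MonoidAlgebra ℂ G) |
      IsSimpleModule (MonoidAlgebra ℂ G) ↥m} ≤ LinearMap.ker Lz := by
    refine sSup_le fun W hW => fun w hw => ?_
    exact hkill W hW w hw
  rw [IsSemisimpleModule.sSup_simples_eq_top] at hle
  have h1 : Lz 1 = 0 := hle trivial
  have : D * 1 = 0 := h1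
  simpa using this

lemma image_eq_of_sum_single_eq (X : Finset G) (m' : ℕ)
    (hinj : Function.Injective (fun x : G => x ^ m'))
    (h : (∑ x ∈ X, MonoidAlgebra.single (x ^ m') (1 : ℂ)) = ∑ x ∈ X, MonoidAlgebra.single x 1) :
    X.image (fun x => x ^ m') = X := by
  classical
  ext y
  have hy := congrArg (fun f : MonoidAlgebra ℂ G => f.coeff y) h
  have h1 := coeff_sum_single (R := ℂ) X (fun x => x ^ m')
    (fun a _ b _ hab => hinj hab) y
  have h2 := coeff_sum_single (R := ℂ) X (fun x => x) (fun a _ b _ hab => hab) y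
  rw [h1, h2, show Finset.image (fun x : G => x) X = X from Finset.image_id] at hy
  constructor
  · intro hmem
    by_contra hc
    rw [if_pos hmem, if_neg hc] at hy
    exact one_ne_zero hy
  · intro hmem
    by_contra hc
    rw [if_neg hc, if_pos hmem] at hy
    exact one_ne_zero hy.symm

end SRingAux

namespace SRingAux
open CategoryTheory

variable {G : Type} [Group G] [Fintype G] [DecidableEq G]

set_option linter.unusedSectionVars false
set_option maxHeartbeats 1000000

lemma char_sum_rat_of_pow_invariant (V : FDRep ℂ G) (X : Finset G)
    (hpow : ∀ v : ℕ, Nat.Coprime v (Fintype.card G) →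
      ∑ x ∈ X, V.character (x ^ v) = ∑ x ∈ X, V.character x) :
    (∑ x ∈ X, V.character x) ∈ Set.range ((↑) : ℚ → ℂ) := by
  classical
  have hn0 : 0 < Fintype.card G := Fintype.card_pos
  haveI : NeZero (Fintype.card G) := ⟨hn0.ne'⟩
  set pn : ℕ+ := ⟨Fintype.card G, hn0⟩ with hpn
  let K := CyclotomicField (Fintype.card G) ℚ
  haveI : IsCyclotomicExtension {Fintype.card G} ℚ K :=
    CyclotomicField.isCyclotomicExtension (Fintype.card G) ℚ
  haveI : FiniteDimensional ℚ K := IsCyclotomicExtension.finiteDimensional {Fintype.card G} ℚ K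
  haveI : IsGalois ℚ K := IsCyclotomicExtension.isGalois {Fintype.card G} ℚ K
  haveI : Algebra.IsAlgebraic ℚ K := Algebra.IsAlgebraic.of_finite ℚ K
  let φ : K →ₐ[ℚ] ℂ := IsAlgClosed.lift
  have hφinj : Function.Injective φ := φ.toRingHom.injective
  set ζK : K := IsCyclotomicExtension.zeta (Fintype.card G) ℚ K with hζKdef
  have hζK : IsPrimitiveRoot ζK (Fintype.card G) := IsCyclotomicExtension.zeta_spec (Fintype.card G) ℚ K
  have hζ : IsPrimitiveRoot (φ ζK) (Fintype.card G) := hζK.map_of_injective hφinj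
  obtain ⟨E, hE⟩ := exists_exponents V X hζ
  set SK : ℕ → K := fun k => (E.map fun e => ζK ^ (e * k)).sum with hSKdef
  have hSK : ∀ k, ∑ x ∈ X, V.character (x ^ k) = φ (SK k) := by
    intro k
    rw [hE k, hSKdef]
    rw [map_multiset_sum, Multiset.map_map]
    refine congrArg Multiset.sum (Multiset.map_congr rfl fun e _ => ?_)
    rw [Function.comp_apply, map_pow]
  have hσSK : ∀ σ : K ≃ₐ[ℚ] K,
      σ (SK 1) = SK (((hζK.autToPow ℚ σ : (ZMod (Fintype.card G))ˣ) : ZMod (Fintype.card G)).val) := by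
    intro σ
    set v := ((hζK.autToPow ℚ σ : (ZMod (Fintype.card G))ˣ) : ZMod (Fintype.card G)).val with hv
    have hspec : ζK ^ v = σ ζK := hζK.autToPow_spec ℚ σ
    rw [hSKdef]
    rw [map_multiset_sum, Multiset.map_map]
    refine congrArg Multiset.sum (Multiset.map_congr rfl fun e _ => ?_)
    rw [Function.comp_apply, map_pow, ← hspec, ← pow_mul, mul_one, mul_comm]
  have hfix : ∀ σ : K ≃ₐ[ℚ] K, σ (SK 1) = SK 1 := by
    intro σ
    rw [hσSK σ]
    set v := ((hζK.autToPow ℚ σ : (ZMod (Fintype.card G))ˣ) : ZMod (Fintype.card G)).val with hv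
    have hvcop : Nat.Coprime v (Fintype.card G) := ZMod.val_coe_unit_coprime _
    apply hφinj
    rw [← hSK v, ← hSK 1]
    simpa [pow_one] using hpow v hvcop
  have hmem : SK 1 ∈ (⊥ : IntermediateField ℚ K) := by
    rw [← IsGalois.fixedField_fixingSubgroup (⊥ : IntermediateField ℚ K)]
    exact fun g => hfix g
  obtain ⟨q, hq⟩ := IntermediateField.mem_bot.1 hmem
  refine ⟨q, ?_⟩
  have h1 : ∑ x ∈ X, V.character x = φ (SK 1) := by
    simpa [pow_one] using hSK 1
  rw [h1, ← hq, φ.commutes q]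
  exact (eq_ratCast (algebraMap ℚ ℂ) q).symm

lemma char_pow_sum_eq_of_rat (V : FDRep ℂ G) (X : Finset G)
    (hrat : (∑ x ∈ X, V.character x) ∈ Set.range ((↑) : ℚ → ℂ))
    (m' : ℕ) (hcop : Nat.Coprime m' (Fintype.card G)) :
    ∑ x ∈ X, V.character (x ^ m') = ∑ x ∈ X, V.character x := by
  classical
  have hn0 : 0 < Fintype.card G := Fintype.card_pos
  haveI : NeZero (Fintype.card G) := ⟨hn0.ne'⟩
  set pn : ℕ+ := ⟨Fintype.card G, hn0⟩ with hpn
  let K := CyclotomicField (Fintype.card G) ℚ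
  haveI : IsCyclotomicExtension {Fintype.card G} ℚ K :=
    CyclotomicField.isCyclotomicExtension (Fintype.card G) ℚ
  haveI : FiniteDimensional ℚ K := IsCyclotomicExtension.finiteDimensional {Fintype.card G} ℚ K
  haveI : Algebra.IsAlgebraic ℚ K := Algebra.IsAlgebraic.of_finite ℚ K
  let φ : K →ₐ[ℚ] ℂ := IsAlgClosed.lift
  have hφinj : Function.Injective φ := φ.toRingHom.injective
  set ζK : K := IsCyclotomicExtension.zeta (Fintype.card G) ℚ K with hζKdef
  have hζK : IsPrimitiveRoot ζK (Fintype.card G) := IsCyclotomicExtension.zeta_spec (Fintype.card G) ℚ K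
  have hζ : IsPrimitiveRoot (φ ζK) (Fintype.card G) := hζK.map_of_injective hφinj
  obtain ⟨E, hE⟩ := exists_exponents V X hζ
  set SK : ℕ → K := fun k => (E.map fun e => ζK ^ (e * k)).sum with hSKdef
  have hSK : ∀ k, ∑ x ∈ X, V.character (x ^ k) = φ (SK k) := by
    intro k
    rw [hE k, hSKdef]
    rw [map_multiset_sum, Multiset.map_map]
    refine congrArg Multiset.sum (Multiset.map_congr rfl fun e _ => ?_)
    rw [Function.comp_apply, map_pow]
  have hσSK : ∀ σ : K ≃ₐ[ℚ] K,
      σ (SK 1) = SK (((hζK.autToPow ℚ σ : (ZMod (Fintype.card G))ˣ) : ZMod (Fintype.card G)).val) := by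
    intro σ
    have hspec : ζK ^ (((hζK.autToPow ℚ σ : (ZMod (Fintype.card G))ˣ) : ZMod (Fintype.card G)).val)
        = σ ζK := hζK.autToPow_spec ℚ σ
    rw [hSKdef]
    rw [map_multiset_sum, Multiset.map_map]
    refine congrArg Multiset.sum (Multiset.map_congr rfl fun e _ => ?_)
    rw [Function.comp_apply, map_pow, ← hspec, ← pow_mul, mul_one, mul_comm]
  obtain ⟨q, hq⟩ := hrat
  have hSK1 : SK 1 = algebraMap ℚ K q := by
    apply hφinj
    rw [← hSK 1]
    rw [φ.commutes q, eq_ratCast (algebraMap ℚ ℂ) q]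
    simpa [pow_one] using hq.symm
  have hirr : Irreducible (Polynomial.cyclotomic (Fintype.card G) ℚ) :=
    Polynomial.cyclotomic.irreducible_rat hn0
  set u : (ZMod (Fintype.card G))ˣ := ZMod.unitOfCoprime m' hcop with hu
  set σ : K ≃ₐ[ℚ] K := (IsCyclotomicExtension.autEquivPow K hirr).symm u with hσ
  have hau : hζK.autToPow ℚ σ = u := by
    have h := (IsCyclotomicExtension.autEquivPow K hirr).apply_symm_apply u
    rw [hσ]
    simpa [IsCyclotomicExtension.autEquivPow] using h
  have hfixed : σ (SK 1) = SK 1 := by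
    rw [hSK1]
    exact σ.commutes q
  have hkey : SK ((↑(u : (ZMod (Fintype.card G))ˣ) : ZMod (Fintype.card G)).val) = SK 1 := by
    rw [← hfixed, hσSK σ, hau]
  have hval : ((↑u : ZMod (Fintype.card G))).val = m' % Fintype.card G := by
    rw [hu, ZMod.coe_unitOfCoprime, ZMod.val_natCast]
  apply_fun φ at hkey
  rw [← hSK, ← hSK] at hkey
  rw [hval] at hkey
  calc ∑ x ∈ X, V.character (x ^ m')
      = ∑ x ∈ X, V.character (x ^ (m' % Fintype.card G)) := by
        refine Finset.sum_congr rfl fun x _ => ?_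
        rw [pow_mod_card]
    _ = ∑ x ∈ X, V.character (x ^ 1) := hkey
    _ = ∑ x ∈ X, V.character x := by simp [pow_one]

end SRingAux

/-- **Theorem 3.3**. A central S-ring `𝒜` over a finite group `G` is rational if and
only if for every irreducible complex character `χ` of `G` and every basic set `X` of
`𝒜`, the character sum `∑_{x ∈ X} χ(x)` is rational. -/



theorem isRational_iff_character_sums_rational {G : Type} [Group G] [Fintype G] [DecidableEq G]
    (A : SRing G) (hA : A.IsCentral) :
    A.IsRational ↔ ∀ V : FDRep ℂ G, CategoryTheory.Simple V → ∀ X ∈ A.S,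
      (∑ x ∈ X, V.character x) ∈ Set.range ((↑) : ℚ → ℂ) := by
  classical
  open SRingAux in
  constructor
  · -- rational ⟹ character sums rational
    intro hR V hV X hX
    refine char_sum_rat_of_pow_invariant V X ?_
    intro v hvcop
    have hgcd : Int.gcd (v : ℤ) (Fintype.card G) = 1 := by
      rw [Int.gcd_natCast_natCast]; exact hvcop
    have himg := hR X hX (v : ℤ) hgcd
    simp only [zpow_natCast] at himg
    have hinj : ∀ a ∈ X, ∀ b ∈ X, a ^ v = b ^ v → a = b := by
      intro a _ b _ hab
      have hc : (Nat.card G).Coprime v := by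
        rw [Nat.card_eq_fintype_card]; exact hvcop.symm
      exact (powCoprime hc).injective hab
    calc ∑ x ∈ X, V.character (x ^ v)
        = ∑ y ∈ X.image (fun x => x ^ v), V.character y := (Finset.sum_image hinj).symm
      _ = ∑ x ∈ X, V.character x := by rw [himg]
  · -- character sums rational ⟹ rational
    intro hsum X hX m hgcd
    have hn0 : 0 < Fintype.card G := Fintype.card_pos
    set n : ℕ := Fintype.card G with hn
    set m' : ℕ := (m % (n : ℤ)).toNat with hm'
    have hnne : (n : ℤ) ≠ 0 := by exact_mod_cast hn0.ne'
    have hmod : ((m' : ℤ)) = m % (n : ℤ) :=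
      Int.toNat_of_nonneg (Int.emod_nonneg m hnne)
    -- coprimality of m' and n
    have hm'cop : Nat.Coprime m' n := by
      have hIC : IsCoprime (m : ℤ) (n : ℤ) := Int.isCoprime_iff_gcd_eq_one.mpr hgcd
      obtain ⟨a, b, hab⟩ := hIC
      have h2 : (n : ℤ) * (m / n) + m % n = m := Int.mul_ediv_add_emod m n
      have h1 : a * (m % (n : ℤ)) + (b + a * (m / n)) * n = 1 := by
        linear_combination hab + a * h2
      have hIC' : IsCoprime ((m' : ℤ)) ((n : ℤ)) := by
        refine ⟨a, b + a * (m / n), ?_⟩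
        rw [hmod]
        exact h1
      have := Int.isCoprime_iff_gcd_eq_one.mp hIC'
      rwa [Int.gcd_natCast_natCast] at this
    -- reduce the goal to natural powers
    have hred : X.image (fun x => x ^ m) = X.image (fun x => x ^ m') := by
      refine Finset.image_congr ?_
      intro x _
      show x ^ m = x ^ m'
      rw [← zpow_natCast x m', hmod, zpow_mod_card]
    rw [hred]
    -- conjugation closure of X
    have hcen : ∀ η, clsSum X * η = η * clsSum X := by
      intro η
      refine hA (clsSum X) ?_ η
      exact Submodule.subset_span (Set.mem_image_of_mem clsSum (Finset.mem_coe.2 hX))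
    have hconj : ∀ g x, x ∈ X → g * x * g⁻¹ ∈ X :=
      conj_mem_of_clsSum_comm X hcen
    -- the two group algebra elements
    set z₁ : MonoidAlgebra ℂ G := ∑ x ∈ X, MonoidAlgebra.single (x ^ m') 1 with hz₁
    set z₂ : MonoidAlgebra ℂ G := ∑ x ∈ X, MonoidAlgebra.single x 1 with hz₂
    have hofz₁ : z₁ = ∑ x ∈ X, MonoidAlgebra.of ℂ G (x ^ m') := by
      refine Finset.sum_congr rfl fun x _ => ?_
      rw [MonoidAlgebra.of_apply]
    have hofz₂ : z₂ = ∑ x ∈ X, MonoidAlgebra.of ℂ G (x ^ 1) := by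
      refine Finset.sum_congr rfl fun x _ => ?_
      rw [MonoidAlgebra.of_apply, pow_one]
    -- D := z₁ - z₂ is central
    have hDcomm : ∀ η, (z₁ - z₂) * η = η * (z₁ - z₂) := by
      have hg : ∀ g : G, (z₁ - z₂) * MonoidAlgebra.of ℂ G g
          = MonoidAlgebra.of ℂ G g * (z₁ - z₂) := by
        intro g
        have h1 := comm_sum_pow (MonoidAlgebra.of ℂ G) X hconj m' g
        have h2 := comm_sum_pow (MonoidAlgebra.of ℂ G) X hconj 1 g
        rw [sub_mul, mul_sub, hofz₁, hofz₂, ← h1, ← h2]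
      intro η
      refine MonoidAlgebra.induction_on
        (motive := fun η => (z₁ - z₂) * η = η * (z₁ - z₂)) η hg ?_ ?_
      · intro f g hf hg'
        rw [mul_add, add_mul, hf, hg']
      · intro r f hf
        rw [mul_smul_comm, smul_mul_assoc, hf]
    -- D kills every simple submodule of the regular module
    have hkill : ∀ W : Submodule (MonoidAlgebra ℂ G) (MonoidAlgebra ℂ G),
        IsSimpleModule (MonoidAlgebra ℂ G) ↥W → ∀ w ∈ W, (z₁ - z₂) * w = 0 := by
      intro W hW w hw
      haveI hSimple : CategoryTheory.Simple (subFDRep W) := subFDRep_simple W hW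
      have hcharW := char_pow_sum_eq_of_rat (subFDRep W) X
        (hsum (subFDRep W) hSimple X hX) m' hm'cop
      have hrq := sum_rho_pow_eq (subFDRep W) hSimple X hconj m' hcharW
      have h1 := LinearMap.congr_fun hrq (⟨w, hw⟩ : ↥W)
      erw [LinearMap.sum_apply, LinearMap.sum_apply] at h1
      have h3 := congrArg (Subtype.val : ↥W → MonoidAlgebra ℂ G) h1
      have hcoe : ∀ p : G → G, (Subtype.val (∑ x ∈ X, ((subFDRep W).ρ (p x)) (⟨w, hw⟩ : ↥W) : (subFDRep W).V))
          = (∑ x ∈ X, MonoidAlgebra.single (p x) (1 : ℂ)) * w := by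
        intro p
        erw [AddSubmonoidClass.coe_finset_sum, Finset.sum_mul]
        exact Finset.sum_congr rfl fun x _ => rfl
      rw [hcoe (fun x => x ^ m'), hcoe (fun x => x)] at h3
      rw [sub_mul, h3, sub_self]
    have hD : z₁ - z₂ = 0 := eq_zero_of_kills_simples _ hDcomm hkill
    have hz : z₁ = z₂ := sub_eq_zero.1 hD
    refine image_eq_of_sum_single_eq X m' ?_ hz
    intro a b hab
    have hc : (Nat.card G).Coprime m' := by
      rw [Nat.card_eq_fintype_card]; exact hm'cop.symm
    exact (powCoprime hc).injective hab
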